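/- Define real functions on a parameter u ∈ [0, u*] by g(u) = u·(y − F(u))/y^2 and R(u) = y/(y − F(u)), where y > 0 is fixed, F(u) = ∑_{n≥1} (3n)!/(n!n!(n+1)!) u^n, and u* ∈ (0,1/27) satisfies y = F(u*) + u*F'(u*). Then g is strictly increasing on [0, u*), g'(u*) = 0, and g''(u*) < 0. -/

import Mathlib

open Nat

/-- The coefficients `(3n)!/(n!·n!·(n+1)!)` (for `n ≥ 1`, and `0` for `n = 0`). -/
noncomputable def fcCoeff (n : ℕ) : ℝ :=
  if n = 0 then 0 else ((3 * n)! : ℝ) / ((n ! : ℝ) * (n !) * ((n + 1)!))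

/-- `F(u) = ∑_{n≥1} (3n)!/(n!·n!·(n+1)!) u^n`. -/
noncomputable def Fser (u : ℝ) : ℝ := ∑' n : ℕ, fcCoeff n * u ^ n

/- ### Auxiliary development -/

open FormalMultilinearSeries Filter Set

/-- first derivative coefficients -/
noncomputable def fcB1 (n : ℕ) : ℝ := ((n : ℝ) + 1) * fcCoeff (n + 1)

/-- second derivative coefficients -/
noncomputable def fcB2 (n : ℕ) : ℝ := ((n : ℝ) + 1) * fcB1 (n + 1)

lemma fact3_le (n : ℕ) : (3 * n)! ≤ 27 ^ n * (n !) ^ 3 := by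
  induction n with
  | zero => simp
  | succ n ih =>
    have h1 : 3 * (n + 1) = (3 * n) + 1 + 1 + 1 := by ring
    rw [h1, factorial_succ, factorial_succ, factorial_succ]
    have h2 : (3*n+1+1+1) * ((3*n+1+1) * ((3*n+1) * (3*n)!)) ≤
        (3*n+3) * ((3*n+3) * ((3*n+3) * (27 ^ n * (n !) ^ 3))) := by
      have e1 : 3*n+1+1+1 = 3*n+3 := by ring
      rw [e1]
      refine Nat.mul_le_mul_left _ ?_
      exact Nat.mul_le_mul (by omega) (Nat.mul_le_mul (by omega) ih)
    refine h2.trans ?_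
    have e2 : (3*n+3) * ((3*n+3) * ((3*n+3) * (27 ^ n * (n !) ^ 3)))
        = 27 ^ (n+1) * ((n+1) * n !) ^ 3 := by ring
    rw [e2, factorial_succ]

lemma fcCoeff_nonneg (n : ℕ) : 0 ≤ fcCoeff n := by
  unfold fcCoeff
  split
  · exact le_refl 0
  · positivity

lemma fcCoeff_le (n : ℕ) : fcCoeff n ≤ 27 ^ n := by
  unfold fcCoeff
  split
  · positivity
  · rw [div_le_iff₀ (by positivity)]
    have h1 : ((3 * n)! : ℝ) ≤ 27 ^ n * (n ! : ℝ) ^ 3 := by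
      calc ((3 * n)! : ℝ) ≤ ((27 ^ n * (n !) ^ 3 : ℕ) : ℝ) := by exact_mod_cast fact3_le n
        _ = 27 ^ n * (n ! : ℝ) ^ 3 := by push_cast; ring
    refine h1.trans ?_
    have h2 : ((n !:ℝ)) ^ 3 ≤ (n ! : ℝ) * (n !) * ((n + 1)!) := by
      have h3 : (n ! : ℝ) ≤ ((n+1)! : ℝ) := by
        exact_mod_cast Nat.factorial_le (Nat.le_succ n)
      nlinarith [show (0:ℝ) < (n ! : ℝ) from by positivity]
    nlinarith [show (0:ℝ) < (27:ℝ)^n from by positivity]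

lemma fcCoeff_one : fcCoeff 1 = 3 := by
  norm_num [fcCoeff, factorial]

lemma fcB1_nonneg (n : ℕ) : 0 ≤ fcB1 n :=
  mul_nonneg (by positivity) (fcCoeff_nonneg _)

lemma fcB2_nonneg (n : ℕ) : 0 ≤ fcB2 n :=
  mul_nonneg (by positivity) (fcB1_nonneg _)

lemma fcB1_zero : fcB1 0 = 3 := by
  simp [fcB1, fcCoeff_one]

/-- canonical growth bound -/
def Bnd (b : ℕ → ℝ) : Prop := ∀ n, |b n| ≤ 1458 * ((n : ℝ) + 1) ^ 2 * 27 ^ n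

lemma bnd_fcCoeff : Bnd fcCoeff := by
  intro n
  rw [abs_of_nonneg (fcCoeff_nonneg n)]
  refine (fcCoeff_le n).trans ?_
  nlinarith [mul_nonneg (show (0:ℝ) ≤ 1458*((n:ℝ)+1)^2 - 1 by nlinarith [(n.cast_nonneg : (0:ℝ) ≤ n)])
    (pow_nonneg (by norm_num : (0:ℝ) ≤ 27) n)]

lemma bnd_fcB1 : Bnd fcB1 := by
  intro n
  rw [abs_of_nonneg (fcB1_nonneg n)]
  have h1 : fcB1 n ≤ ((n:ℝ) + 1) * 27 ^ (n+1) := by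
    unfold fcB1
    exact mul_le_mul_of_nonneg_left (fcCoeff_le (n+1)) (by positivity)
  refine h1.trans ?_
  rw [pow_succ]
  nlinarith [mul_nonneg (show (0:ℝ) ≤ 1458*((n:ℝ)+1)^2 - 27*((n:ℝ)+1)
    by nlinarith [(n.cast_nonneg : (0:ℝ) ≤ n)]) (pow_nonneg (by norm_num : (0:ℝ) ≤ 27) n)]

lemma bnd_fcB2 : Bnd fcB2 := by
  intro n
  rw [abs_of_nonneg (fcB2_nonneg n)]
  have h1 : fcB2 n ≤ ((n:ℝ) + 1) * (((n:ℝ) + 2) * 27 ^ (n+2)) := by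
    unfold fcB2 fcB1
    push_cast
    have h2 : fcCoeff (n + 2) ≤ 27 ^ (n + 2) := by exact_mod_cast fcCoeff_le (n + 2)
    have hn : (0:ℝ) ≤ (n:ℝ) := n.cast_nonneg
    have h3 : ((n:ℝ)+1+1) * fcCoeff (n+1+1) ≤ ((n:ℝ)+2) * 27^(n+2) := by
      have : ((n:ℝ)+1+1) = (n:ℝ)+2 := by ring
      rw [this]
      have := fcCoeff_nonneg (n+1+1)
      show ((n:ℝ)+2) * fcCoeff (n+2) ≤ ((n:ℝ)+2) * 27^(n+2)
      nlinarith
    exact mul_le_mul_of_nonneg_left h3 (by positivity)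
  refine h1.trans ?_
  rw [pow_succ, pow_succ]
  nlinarith [mul_nonneg (show (0:ℝ) ≤ 1458*((n:ℝ)+1)^2 - 729*((n:ℝ)+1)*((n:ℝ)+2)
    by nlinarith [(n.cast_nonneg : (0:ℝ) ≤ n), sq_nonneg ((n:ℝ))]) (pow_nonneg (by norm_num : (0:ℝ) ≤ 27) n)]

/-- the radius `1/27` as an extended nonnegative real -/
noncomputable def R27 : ENNReal := ((27⁻¹ : NNReal) : ENNReal)

/-- radius bound -/
lemma radius_ge {b : ℕ → ℝ} (hb : Bnd b) :
    R27 ≤ (ofScalars ℝ b).radius := by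
  refine ENNReal.le_of_forall_nnreal_lt (fun r hr => ?_)
  rw [R27, ENNReal.coe_lt_coe] at hr
  apply FormalMultilinearSeries.le_radius_of_summable_norm
  have hr' : (27 : ℝ) * r < 1 := by
    have : (r : ℝ) < ((27:NNReal)⁻¹ : ℝ) := hr
    have h27 : ((27:NNReal)⁻¹ : ℝ) = (27 : ℝ)⁻¹ := by
      push_cast
      norm_num
    rw [h27] at this
    nlinarith
  have hnorm : ∀ n, ‖ofScalars ℝ b n‖ * (r:ℝ) ^ n ≤
      1458 * ((n:ℝ) + 1) ^ 2 * ((27 : ℝ) * r) ^ n := by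
    intro n
    rw [FormalMultilinearSeries.ofScalars_norm]
    have h1 : ‖b n‖ ≤ 1458 * ((n : ℝ) + 1) ^ 2 * 27 ^ n := hb n
    have h2 : (0:ℝ) ≤ (r:ℝ) ^ n := by positivity
    calc ‖b n‖ * (r:ℝ) ^ n ≤ (1458 * ((n : ℝ) + 1) ^ 2 * 27 ^ n) * (r:ℝ) ^ n := by
          exact mul_le_mul_of_nonneg_right h1 h2
      _ = 1458 * ((n:ℝ) + 1) ^ 2 * ((27 : ℝ) * r) ^ n := by rw [mul_pow]; ring
  have hs : Summable (fun n : ℕ => 1458 * ((n:ℝ) + 1) ^ 2 * ((27 : ℝ) * r) ^ n) := by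
    have hx : ‖(27:ℝ) * r‖ < 1 := by
      rw [Real.norm_eq_abs, abs_of_nonneg (by positivity)]; exact hr'
    have h2 := summable_pow_mul_geometric_of_norm_lt_one (R := ℝ) 2 hx
    have h1 := summable_pow_mul_geometric_of_norm_lt_one (R := ℝ) 1 hx
    have h0 := summable_pow_mul_geometric_of_norm_lt_one (R := ℝ) 0 hx
    have := ((h2.add (h1.mul_left 2)).add h0).mul_left 1458
    refine this.congr (fun n => ?_)
    simp only [pow_zero, pow_one]
    ring
  exact Summable.of_nonneg_of_le (fun n => by positivity) hnorm hs

lemma mem_ball27 {u : ℝ} (h0 : 0 ≤ u) (h1 : u < 1 / 27) :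
    u ∈ Metric.eball (0 : ℝ) R27 := by
  rw [R27, Metric.emetric_ball_nnreal, Metric.mem_ball, Real.dist_eq, sub_zero, abs_of_nonneg h0]
  rw [NNReal.coe_inv]
  have : ((27:NNReal) : ℝ) = 27 := by norm_num
  rw [this]
  linarith

lemma hps {b : ℕ → ℝ} (hb : Bnd b) :
    HasFPowerSeriesOnBall (ofScalarsSum b) (ofScalars ℝ b) 0 R27 := by
  have hpos : (0 : ENNReal) < R27 := by
    rw [R27]
    simp
  exact ((ofScalars ℝ b).hasFPowerSeriesOnBall (lt_of_lt_of_le hpos (radius_ge hb))).mono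
    hpos (radius_ge hb)

lemma hasSum_b {b : ℕ → ℝ} (hb : Bnd b) {u : ℝ} (h0 : 0 ≤ u) (h1 : u < 1 / 27) :
    HasSum (fun n => b n * u ^ n) (ofScalarsSum b u) := by
  have := (hps hb).hasSum (mem_ball27 h0 h1)
  rw [zero_add] at this
  have he : (fun n : ℕ => ofScalars ℝ b n fun _ => u) = fun n => b n * u ^ n := by
    funext n
    rw [FormalMultilinearSeries.ofScalars_apply_eq, smul_eq_mul]
  rwa [he] at this

lemma contOn_b {b : ℕ → ℝ} (hb : Bnd b) :
    ContinuousOn (ofScalarsSum b) (Set.Ico (0:ℝ) (1/27)) := by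
  refine ((hps hb).continuousOn).mono (fun u hu => mem_ball27 hu.1 hu.2)

set_option maxHeartbeats 1000000 in
lemma hasDerivAt_b {b b' : ℕ → ℝ} (hb : Bnd b) (hb' : Bnd b')
    (hbb' : ∀ n, b' n = ((n:ℝ) + 1) * b (n + 1)) {u : ℝ} (h0 : 0 < u) (h1 : u < 1 / 27) :
    HasDerivAt (ofScalarsSum b) (ofScalarsSum b' u) u := by
  set p := ofScalars ℝ b with hp
  set f : ℝ → ℝ := ofScalarsSum b with hf
  have HPS : HasFPowerSeriesOnBall f p 0 R27 := hps hb
  have hu : u ∈ Metric.eball (0:ℝ) R27 := mem_ball27 h0.le h1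
  have hdiff : DifferentiableAt ℝ f u := by
    have : AnalyticAt ℝ f u := HPS.analyticAt_of_mem (by simpa using hu)
    exact this.differentiableAt
  have h1sum : HasSum (fun n => (p.derivSeries n fun _ => u) 1) (fderiv ℝ f u 1) := by
    have h := (HPS.fderiv).hasSum hu
    rw [zero_add] at h
    have h2 := (ContinuousLinearMap.apply ℝ ℝ (1:ℝ)).hasSum h
    simpa only [ContinuousLinearMap.apply_apply] using h2
  have heval : ∀ n, (p.derivSeries n fun _ => u) 1 = b' n * u ^ n := by
    intro n
    set L := p.derivSeries n fun _ => u with hL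
    have hLy : L u = ((n:ℝ) + 1) * (b (n + 1) * u ^ (n + 1)) := by
      rw [hL, FormalMultilinearSeries.derivSeries_apply_diag]
      rw [FormalMultilinearSeries.ofScalars_apply_eq, smul_eq_mul, nsmul_eq_mul]
      push_cast
      ring
    have hL1 : L u = u * L 1 := by
      conv_lhs => rw [show u = u • (1:ℝ) by simp]
      rw [map_smul, smul_eq_mul]
    have hc : u * L 1 = u * (b' n * u ^ n) := by
      rw [← hL1, hLy, hbb' n, pow_succ]
      ring
    exact mul_left_cancel₀ (ne_of_gt h0) hc
  have h2sum : HasSum (fun n => b' n * u ^ n) (ofScalarsSum b' u) := hasSum_b hb' h0.le h1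
  have he2 : (fun n => (p.derivSeries n fun _ => u) 1) = fun n => b' n * u ^ n :=
    funext heval
  rw [he2] at h1sum
  have hval : fderiv ℝ f u 1 = ofScalarsSum b' u := h1sum.unique h2sum
  have := hdiff.hasDerivAt
  rwa [← fderiv_apply_one_eq_deriv, hval] at this

lemma Fser_eq : Fser = ofScalarsSum fcCoeff := by
  funext u
  rw [FormalMultilinearSeries.ofScalarsSum_eq_tsum]
  simp only [smul_eq_mul]
  rfl

lemma fcB2_eq (n : ℕ) : fcB2 n = ((n:ℝ) + 1) * fcB1 (n + 1) := rfl

lemma fcB1_eq (n : ℕ) : fcB1 n = ((n:ℝ) + 1) * fcCoeff (n + 1) := rfl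

/-- derivative of Fser -/
lemma hasDerivAt_Fser {u : ℝ} (h0 : 0 < u) (h1 : u < 1 / 27) :
    HasDerivAt Fser (ofScalarsSum fcB1 u) u := by
  rw [Fser_eq]
  exact hasDerivAt_b bnd_fcCoeff bnd_fcB1 fcB1_eq h0 h1

lemma hasDerivAt_F1 {u : ℝ} (h0 : 0 < u) (h1 : u < 1 / 27) :
    HasDerivAt (ofScalarsSum fcB1) (ofScalarsSum fcB2 u) u :=
  hasDerivAt_b bnd_fcB1 bnd_fcB2 fcB2_eq h0 h1

lemma F1_ge {u : ℝ} (h0 : 0 ≤ u) (h1 : u < 1 / 27) : 3 ≤ ofScalarsSum fcB1 u := by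
  have hs := hasSum_b bnd_fcB1 h0 h1
  have := le_hasSum hs 0 (fun j _ => by
    have := fcB1_nonneg j
    positivity)
  simpa [fcB1_zero] using this

lemma F2_nonneg {u : ℝ} (h0 : 0 ≤ u) (h1 : u < 1 / 27) : 0 ≤ ofScalarsSum fcB2 u := by
  have hs := hasSum_b bnd_fcB2 h0 h1
  exact hs.nonneg (fun n => by
    have := fcB2_nonneg n
    positivity)

/-- With `y > 0` fixed and `u* ∈ (0,1/27)` the solution of `y = F(u*) + u*F'(u*)`,
the function `g(u) = u(y − F(u))/y²` is strictly increasing on `[0, u*)`,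
has `g'(u*) = 0` and `g''(u*) < 0`. -/
theorem stmt_9 (y ustar : ℝ) (hy : 0 < y) (hu : ustar ∈ Set.Ioo (0 : ℝ) (1 / 27))
    (hstar : y = Fser ustar + ustar * deriv Fser ustar) :
    StrictMonoOn (fun u : ℝ => u * (y - Fser u) / y ^ 2) (Set.Ico 0 ustar) ∧
    deriv (fun u : ℝ => u * (y - Fser u) / y ^ 2) ustar = 0 ∧
    iteratedDeriv 2 (fun u : ℝ => u * (y - Fser u) / y ^ 2) ustar < 0 := by
  obtain ⟨hu0, hu27⟩ := hu
  set F1 : ℝ → ℝ := ofScalarsSum fcB1 with hF1def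
  set F2 : ℝ → ℝ := ofScalarsSum fcB2 with hF2def
  set g : ℝ → ℝ := fun u : ℝ => u * (y - Fser u) / y ^ 2 with hg
  -- derivative of Fser at ustar
  have hdFstar : deriv Fser ustar = F1 ustar := (hasDerivAt_Fser hu0 hu27).deriv
  have hstar' : y = Fser ustar + ustar * F1 ustar := by rwa [hdFstar] at hstar
  -- auxiliary function h
  set h : ℝ → ℝ := fun t => y - Fser t - t * F1 t with hh
  have hhstar : h ustar = 0 := by
    simp only [hh]
    linarith
  -- derivative of h
  have hdh : ∀ t ∈ Set.Ioo (0:ℝ) (1/27),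
      HasDerivAt h (-(2 * F1 t + t * F2 t)) t := by
    intro t ht
    have h1 := hasDerivAt_Fser ht.1 ht.2
    have h2 := hasDerivAt_F1 ht.1 ht.2
    have := ((hasDerivAt_const t y).sub h1).sub ((hasDerivAt_id t).mul h2)
    refine this.congr_deriv ?_
    simp only [id_eq]
    ring
  -- derivative of g
  have hdg : ∀ u ∈ Set.Ioo (0:ℝ) (1/27), HasDerivAt g (h u / y ^ 2) u := by
    intro u hu'
    have h1 := hasDerivAt_Fser hu'.1 hu'.2
    have := (((hasDerivAt_id u).mul ((hasDerivAt_const u y).sub h1))).div_const (y ^ 2)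
    refine this.congr_deriv ?_
    simp only [hh, id_eq, Pi.sub_apply]
    ring
  -- continuity
  have hcF : ContinuousOn Fser (Set.Ico (0:ℝ) (1/27)) := by
    rw [Fser_eq]; exact contOn_b bnd_fcCoeff
  have hcF1 : ContinuousOn F1 (Set.Ico (0:ℝ) (1/27)) := contOn_b bnd_fcB1
  have hsub : Set.Icc (0:ℝ) ustar ⊆ Set.Ico (0:ℝ) (1/27) := fun x hx =>
    ⟨hx.1, lt_of_le_of_lt hx.2 hu27⟩
  have hsub' : Set.Ico (0:ℝ) ustar ⊆ Set.Ico (0:ℝ) (1/27) := fun x hx =>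
    ⟨hx.1, lt_trans hx.2 hu27⟩
  have hch : ContinuousOn h (Set.Icc 0 ustar) := by
    refine ((continuousOn_const.sub (hcF.mono hsub)).sub
      (continuousOn_id.mul (hcF1.mono hsub)))
  -- h strictly decreasing on Icc 0 ustar
  have hanti : StrictAntiOn h (Set.Icc 0 ustar) := by
    refine strictAntiOn_of_deriv_neg (convex_Icc _ _) hch (fun x hx => ?_)
    rw [interior_Icc] at hx
    have hx' : x ∈ Set.Ioo (0:ℝ) (1/27) := ⟨hx.1, lt_trans hx.2 hu27⟩
    rw [(hdh x hx').deriv]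
    have hge : 3 ≤ F1 x := F1_ge hx'.1.le hx'.2
    have hge2 : 0 ≤ F2 x := F2_nonneg hx'.1.le hx'.2
    nlinarith [hx'.1]
  -- h is positive on [0, ustar)
  have hpos : ∀ u ∈ Set.Ico (0:ℝ) ustar, 0 < h u := by
    intro u hu'
    have := hanti ⟨hu'.1, hu'.2.le⟩ (Set.right_mem_Icc.mpr (le_of_lt hu0)) hu'.2
    rw [hhstar] at this
    exact this
  constructor
  · -- strict monotonicity of g
    refine strictMonoOn_of_deriv_pos (convex_Ico _ _) ?_ (fun x hx => ?_)
    · refine ((continuousOn_id.mul (continuousOn_const.sub (hcF.mono hsub'))).div_const _)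
    · rw [interior_Ico] at hx
      have hx' : x ∈ Set.Ioo (0:ℝ) (1/27) := ⟨hx.1, lt_trans hx.2 hu27⟩
      rw [(hdg x hx').deriv]
      have := hpos x ⟨hx.1.le, hx.2⟩
      positivity
  constructor
  · -- g'(ustar) = 0
    rw [(hdg ustar ⟨hu0, hu27⟩).deriv, hhstar, zero_div]
  · -- g''(ustar) < 0
    have hev : deriv g =ᶠ[nhds ustar] (fun u => h u / y ^ 2) := by
      filter_upwards [Ioo_mem_nhds hu0 hu27] with u hu'
      exact (hdg u hu').deriv
    have h2 : iteratedDeriv 2 g ustar = deriv (deriv g) ustar := by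
      rw [iteratedDeriv_succ, iteratedDeriv_one]
    rw [h2, hev.deriv_eq]
    have hd := (hdh ustar ⟨hu0, hu27⟩).div_const (y ^ 2)
    rw [hd.deriv]
    have hge : 3 ≤ F1 ustar := F1_ge hu0.le hu27
    have hge2 : 0 ≤ F2 ustar := F2_nonneg hu0.le hu27
    have hnum : -(2 * F1 ustar + ustar * F2 ustar) < 0 := by nlinarith
    have hden : (0:ℝ) < y ^ 2 := by positivity
    exact div_neg_of_neg_of_pos hnum hden
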